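/- Let t ≥ 1 and let n_1, …, n_t be positive integers with n = n_1 + ⋯ + n_t. Let a ≥ 0 and l ≥ 0 be integers with a + l ≤ n, and fix j with 1 ≤ j ≤ t. If ⌈n_j(2(a+l)+1)/(2n)⌉ > ⌈n_j(2a−1)/(2n)⌉, then the set Ω_j = {i : a + 1 ≤ i ≤ a + l, ⌈n_j(2a−1)/(2n)⌉ < ⌈n_j(2i−1)/(2n)⌉ < ⌈n_j(2i+1)/(2n)⌉} has cardinality exactly ⌈n_j(2(a+l)+1)/(2n)⌉ − ⌈n_j(2a−1)/(2n)⌉ − 1. -/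

import Mathlib

lemma stmt_2_aux (g : ℕ → ℤ) (hmono : ∀ i, g i ≤ g (i + 1))
    (hstep : ∀ i, g (i + 1) ≤ g i + 1) (a : ℕ) :
    ∀ l : ℕ, g a < g (a + l + 1) →
    (((Finset.Icc (a + 1) (a + l)).filter
        (fun i => g a < g i ∧ g i < g (i + 1))).card : ℤ)
      = g (a + l + 1) - g a - 1 := by
  have hmono' : Monotone g := monotone_nat_of_le_succ hmono
  intro l
  induction l with
  | zero =>
    intro h
    simp only [Nat.add_zero] at h ⊢
    rw [show Finset.Icc (a + 1) a = ∅ from Finset.Icc_eq_empty (by omega)]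
    simp only [Finset.filter_empty, Finset.card_empty, Nat.cast_zero]
    have := hstep a
    omega
  | succ l ih =>
    intro h
    have hIcc : Finset.Icc (a + 1) (a + (l + 1)) = insert (a + l + 1) (Finset.Icc (a + 1) (a + l)) := by
      rw [show a + (l + 1) = (a + l) + 1 from rfl, ← Finset.insert_Icc_right_eq_Icc_add_one (by omega)]
    have hsucc : g (a + (l + 1) + 1) = g (a + l + 1 + 1) := rfl
    rw [hIcc, Finset.filter_insert]
    have hnm : a + l + 1 ∉ Finset.Icc (a + 1) (a + l) := by
      simp [Finset.mem_Icc]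
    have hs1 := hstep (a + l + 1)
    have hs0 := hstep (a + l)
    have hm1 := hmono (a + l + 1)
    by_cases h1 : g a < g (a + l + 1) ∧ g (a + l + 1) < g (a + l + 1 + 1)
    · rw [if_pos h1, Finset.card_insert_of_notMem (fun hx => hnm (Finset.mem_filter.mp hx).1)]
      have := ih h1.1
      push_cast
      omega
    · rw [if_neg h1]
      by_cases h2 : g a < g (a + l + 1)
      · have := ih h2
        have h3 : ¬ g (a + l + 1) < g (a + l + 1 + 1) := fun hx => h1 ⟨h2, hx⟩
        omega
      · have hempty : (Finset.Icc (a + 1) (a + l)).filter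
            (fun i => g a < g i ∧ g i < g (i + 1)) = ∅ := by
          rw [Finset.filter_eq_empty_iff]
          intro i hi
          rw [Finset.mem_Icc] at hi
          have : g i ≤ g (a + l + 1) := hmono' (by omega)
          intro ⟨hx, _⟩
          omega
        rw [hempty]
        simp only [Finset.card_empty, Nat.cast_zero]
        omega

/-- Counting identity for the nondegenerate case in the proof of Lemma 1: if
`⌈n_j(2(a+l)+1)/(2n)⌉ > ⌈n_j(2a-1)/(2n)⌉`, then `Ω_j` has cardinality exactly
`⌈n_j(2(a+l)+1)/(2n)⌉ - ⌈n_j(2a-1)/(2n)⌉ - 1`. -/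
theorem stmt_2 (t : ℕ) (ht : 1 ≤ t) (nv : Fin t → ℕ) (hnv : ∀ j, 0 < nv j)
    (n : ℕ) (hn : n = ∑ j, nv j)
    (a l : ℕ) (hal : a + l ≤ n) (j : Fin t)
    (hne : ⌈(nv j : ℚ) * (2 * ((a : ℚ) + (l : ℚ)) + 1) / (2 * (n : ℚ))⌉ >
      ⌈(nv j : ℚ) * (2 * (a : ℚ) - 1) / (2 * (n : ℚ))⌉) :
    (((Finset.Icc (a + 1) (a + l)).filter
      (fun (i : ℕ) =>
        ⌈(nv j : ℚ) * (2 * (a : ℚ) - 1) / (2 * (n : ℚ))⌉ <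
          ⌈(nv j : ℚ) * (2 * (i : ℚ) - 1) / (2 * (n : ℚ))⌉ ∧
        ⌈(nv j : ℚ) * (2 * (i : ℚ) - 1) / (2 * (n : ℚ))⌉ <
          ⌈(nv j : ℚ) * (2 * (i : ℚ) + 1) / (2 * (n : ℚ))⌉)).card : ℤ) =
      ⌈(nv j : ℚ) * (2 * ((a : ℚ) + (l : ℚ)) + 1) / (2 * (n : ℚ))⌉ -
        ⌈(nv j : ℚ) * (2 * (a : ℚ) - 1) / (2 * (n : ℚ))⌉ - 1 := by
  have hnpos : 0 < n := by
    rw [hn]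
    exact Finset.sum_pos (fun i _ => hnv i) ⟨j, Finset.mem_univ j⟩
  have hmn : nv j ≤ n := by
    rw [hn]
    exact Finset.single_le_sum (f := fun i => nv i) (fun i _ => Nat.zero_le _) (Finset.mem_univ j)
  have hnQ : (0 : ℚ) < n := by exact_mod_cast hnpos
  set g : ℕ → ℤ := fun i => ⌈(nv j : ℚ) * (2 * (i : ℚ) - 1) / (2 * (n : ℚ))⌉ with hg
  have hmono : ∀ i, g i ≤ g (i + 1) := by
    intro i
    apply Int.ceil_le_ceil
    apply div_le_div_of_nonneg_right _ (by positivity)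
    have : (0 : ℚ) ≤ (nv j : ℚ) := by positivity
    push_cast
    nlinarith
  have hstep : ∀ i, g (i + 1) ≤ g i + 1 := by
    intro i
    have harg : (nv j : ℚ) * (2 * ((i + 1 : ℕ) : ℚ) - 1) / (2 * (n : ℚ))
        = (nv j : ℚ) * (2 * (i : ℚ) - 1) / (2 * (n : ℚ)) + (nv j : ℚ) / (n : ℚ) := by
      field_simp
      push_cast
      ring
    have h1 : ⌈(nv j : ℚ) / (n : ℚ)⌉ ≤ 1 := by
      rw [Int.ceil_le, Int.cast_one, div_le_one hnQ]
      exact_mod_cast hmn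
    calc g (i + 1) = ⌈(nv j : ℚ) * (2 * (i : ℚ) - 1) / (2 * (n : ℚ)) + (nv j : ℚ) / (n : ℚ)⌉ := by
          rw [hg]; exact congrArg _ harg
      _ ≤ g i + ⌈(nv j : ℚ) / (n : ℚ)⌉ := Int.ceil_add_le _ _
      _ ≤ g i + 1 := by omega
  have e1 : ∀ i : ℕ, ⌈(nv j : ℚ) * (2 * (i : ℚ) + 1) / (2 * (n : ℚ))⌉ = g (i + 1) := by
    intro i
    rw [hg]
    congr 1
    push_cast
    ring
  have e2 : ⌈(nv j : ℚ) * (2 * ((a : ℚ) + (l : ℚ)) + 1) / (2 * (n : ℚ))⌉ = g (a + l + 1) := by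
    rw [hg]
    congr 1
    push_cast
    ring
  simp only [e1, e2] at hne ⊢
  exact stmt_2_aux g hmono hstep a l hne
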